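/- For the two-mode reduced Hamiltonian H̃ = (I_p + I_q)(J_p + J_q) + 2√(I_p I_q J_p J_q)cos(θ_q − θ_p + φ_p − φ_q), the three functions K₁ = I_p + I_q, K₂ = J_p + J_q, K₃ = I_q + J_q Poisson-commute with H̃ and pairwise with each other; hence the two-mode system is completely integrable. -/

import Mathlib

/-- Partial derivative in the `i`-th coordinate direction on `ℝ⁸`. -/
noncomputable def pd (i : Fin 8) (f : (Fin 8 → ℝ) → ℝ) (x : Fin 8 → ℝ) : ℝ :=
  fderiv ℝ f x (Pi.single i 1)

/-- Poisson bracket on functions of `(I_p, I_q, J_p, J_q, θ_p, θ_q, φ_p, φ_q)`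
(coordinates `0,…,7` respectively):
`{f,g} = Σ_j (∂f/∂I_j ∂g/∂θ_j − ∂f/∂θ_j ∂g/∂I_j + ∂f/∂J_j ∂g/∂φ_j − ∂f/∂φ_j ∂g/∂J_j)`. -/
noncomputable def pb (f g : (Fin 8 → ℝ) → ℝ) (x : Fin 8 → ℝ) : ℝ :=
  (pd 0 f x * pd 4 g x - pd 4 f x * pd 0 g x) +
  (pd 1 f x * pd 5 g x - pd 5 f x * pd 1 g x) +
  (pd 2 f x * pd 6 g x - pd 6 f x * pd 2 g x) +
  (pd 3 f x * pd 7 g x - pd 7 f x * pd 3 g x)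

/-- The two-mode reduced Hamiltonian
`H̃ = (I_p+I_q)(J_p+J_q) + 2√(I_p I_q J_p J_q) cos(θ_q − θ_p + φ_p − φ_q)`. -/
noncomputable def Htilde : (Fin 8 → ℝ) → ℝ := fun x =>
  (x 0 + x 1) * (x 2 + x 3) +
    2 * Real.sqrt (x 0 * x 1 * x 2 * x 3) * Real.cos (x 5 - x 4 + x 6 - x 7)

/-- `K₁ = I_p + I_q`. -/
def K1 : (Fin 8 → ℝ) → ℝ := fun x => x 0 + x 1
/-- `K₂ = J_p + J_q`. -/
def K2 : (Fin 8 → ℝ) → ℝ := fun x => x 2 + x 3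
/-- `K₃ = I_q + J_q`. -/
def K3 : (Fin 8 → ℝ) → ℝ := fun x => x 1 + x 3

/-- `K₁, K₂, K₃` Poisson-commute with `H̃` and pairwise with each other. -/
theorem stmt_12 (x : Fin 8 → ℝ)
    (h0 : 0 < x 0) (h1 : 0 < x 1) (h2 : 0 < x 2) (h3 : 0 < x 3) :
    pb K1 Htilde x = 0 ∧ pb K2 Htilde x = 0 ∧ pb K3 Htilde x = 0 ∧
    pb K1 K2 x = 0 ∧ pb K1 K3 x = 0 ∧ pb K2 K3 x = 0 := by
  have hs : x 0 * x 1 * x 2 * x 3 ≠ 0 := by positivity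
  have hp : ∀ i : Fin 8, HasFDerivAt (fun y : Fin 8 → ℝ => y i)
      (ContinuousLinearMap.proj i : (Fin 8 → ℝ) →L[ℝ] ℝ) x := fun i => hasFDerivAt_apply i x
  have hprod : HasFDerivAt (fun y : Fin 8 → ℝ => y 0 * y 1 * y 2 * y 3) _ x :=
    (((hp 0).mul (hp 1)).mul (hp 2)).mul (hp 3)
  have hsqrt := (Real.hasDerivAt_sqrt hs).comp_hasFDerivAt x hprod
  have hΨ : HasFDerivAt (fun y : Fin 8 → ℝ => y 5 - y 4 + y 6 - y 7) _ x :=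
    (((hp 5).sub (hp 4)).add (hp 6)).sub (hp 7)
  have hcos := (Real.hasDerivAt_cos _).comp_hasFDerivAt x hΨ
  have hH : HasFDerivAt Htilde _ x :=
    (((hp 0).add (hp 1)).mul ((hp 2).add (hp 3))).add ((hsqrt.const_mul 2).mul hcos)
  set s := Real.sqrt (x 0 * x 1 * x 2 * x 3) with hsdef
  set Ψ := x 5 - x 4 + x 6 - x 7 with hΨdef
  have h4 : pd 4 Htilde x = 2 * s * Real.sin Ψ := by
    rw [pd, hH.fderiv]; simp [Pi.single_apply]
    exact Or.inl rfl
  have h5 : pd 5 Htilde x = -(2 * s * Real.sin Ψ) := by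
    rw [pd, hH.fderiv]; simp [Pi.single_apply]
    exact Or.inl rfl
  have h6 : pd 6 Htilde x = -(2 * s * Real.sin Ψ) := by
    rw [pd, hH.fderiv]; simp [Pi.single_apply]
    exact Or.inl rfl
  have h7 : pd 7 Htilde x = 2 * s * Real.sin Ψ := by
    rw [pd, hH.fderiv]; simp [Pi.single_apply]
    exact Or.inl rfl
  have hK1 : ∀ i : Fin 8, pd i K1 x = (if i = 0 then 1 else 0) + (if i = 1 then 1 else 0) := by
    intro i
    unfold pd K1; rw [(show HasFDerivAt (fun y : Fin 8 → ℝ => y 0 + y 1) _ x from (hp 0).add (hp 1)).fderiv]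
    simp [Pi.single_apply, eq_comm]
  have hK2 : ∀ i : Fin 8, pd i K2 x = (if i = 2 then 1 else 0) + (if i = 3 then 1 else 0) := by
    intro i
    unfold pd K2; rw [(show HasFDerivAt (fun y : Fin 8 → ℝ => y 2 + y 3) _ x from (hp 2).add (hp 3)).fderiv]
    simp [Pi.single_apply, eq_comm]
  have hK3 : ∀ i : Fin 8, pd i K3 x = (if i = 1 then 1 else 0) + (if i = 3 then 1 else 0) := by
    intro i
    unfold pd K3; rw [(show HasFDerivAt (fun y : Fin 8 → ℝ => y 1 + y 3) _ x from (hp 1).add (hp 3)).fderiv]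
    simp [Pi.single_apply, eq_comm]
  refine ⟨?_, ?_, ?_, ?_, ?_, ?_⟩ <;>
    simp [pb, hK1, hK2, hK3, h4, h5, h6, h7]
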